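/- arXiv:2605.18662 — 2 statements merged into one kernel-verified Lean document; each statement's English description precedes it below -/
import Mathlib

section
/- (Gradient bound on the orthogonal direction.) Let d, k, n be positive integers, γ, σ, C > 0 and η ∈ (0,1). Let w*, ŵ ∈ ℝ^{kd} with ‖w*‖₂ ≤ 1 and ‖ŵ‖₂ ≤ 1, suppose κ := ⟨ŵ, w*⟩ ∈ (0,1), and set w' := (w* − κŵ)/√(1−κ²). Let I be a finite index set partitioned into three disjoint parts P, O, D, with samples (x_i, y_i) ∈ ℝ^d × {1,…,k} and labels ŷ_i ∈ {1,…,k}. Assume: (i) for every i ∈ P ∪ O and every y' ≠ y_i, ⟨w*_{y_i} − w*_{y'}, x_i⟩ ≥ γ; (ii) for every i ∈ P, ŷ_i ≠ y_i and ⟨ŵ_{y_i} − ŵ_{ŷ_i}, x_i⟩ ≤ γ/2; (iii) for every i ∈ O, either ŷ_i = y_i or ⟨ŵ_{y_i} − ŵ_{ŷ_i}, x_i⟩ ≤ γ; (iv) |D| ≤ ηn, and there exist centers μ_i ∈ ℝ^d (i ∈ D) such that for every i ∈ D and every y' ≠ y_i, ⟨w*_{y_i} − w*_{y'}, μ_i⟩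 ≥ γ, for every subset T ⊆ D, ‖Σ_{i∈T}(x_i − μ_i)‖₂ ≤ C·σ·√(|T|·n), and for every i ∈ D, ⟨ŵ_{ŷ_i} − ŵ_{y_i}, x_i⟩ ≥ −γ; (v) |P|/4 > 2Cσn√η / γ. Then the vector g := (1/γ)·Σ_{i∈I}(Ψ(x_i, ŷ_i) − Ψ(x_i, y_i)) satisfies ⟨g, w'⟩ ≤ −(√5/4)·|P|. -/
open scoped BigOperators RealInnerProductSpace
open Finset

/-- The class-sensitive feature map `Ψ : ℝ^d × {1,…,k} → ℝ^{kd}`: the `y`-th block of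
`d` coordinates of `Psi d k x y` equals `x`, the remaining coordinates are zero. -/
noncomputable def Psi (d k : ℕ) (x : EuclideanSpace ℝ (Fin d)) (y : Fin k) :
    EuclideanSpace ℝ (Fin k × Fin d) :=
  WithLp.toLp 2 (fun p : Fin k × Fin d => if p.1 = y then x p.2 else 0)

/-- The `y`-th block `w_y ∈ ℝ^d` of a vector `w ∈ ℝ^{kd}`. -/
noncomputable def block (d k : ℕ) (w : EuclideanSpace ℝ (Fin k × Fin d)) (y : Fin k) :
    EuclideanSpace ℝ (Fin d) :=
  WithLp.toLp 2 (fun j => w (y, j))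

lemma inner_Psi (d k : ℕ) (x : EuclideanSpace ℝ (Fin d)) (b : Fin k)
    (w : EuclideanSpace ℝ (Fin k × Fin d)) :
    ⟪Psi d k x b, w⟫ = ⟪block d k w b, x⟫ := by
  simp only [PiLp.inner_apply, RCLike.inner_apply, conj_trivial, Psi, block, PiLp.toLp_apply]
  rw [Fintype.sum_prod_type]
  simp [ite_mul, mul_comm]

lemma inner_Psi_sub (d k : ℕ) (x : EuclideanSpace ℝ (Fin d)) (a b : Fin k)
    (w : EuclideanSpace ℝ (Fin k × Fin d)) :
    ⟪Psi d k x b - Psi d k x a, w⟫ = ⟪block d k w b - block d k w a, x⟫ := by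
  rw [inner_sub_left, inner_sub_left, inner_Psi, inner_Psi]

lemma psi_add (d k : ℕ) (u v : EuclideanSpace ℝ (Fin d)) (b : Fin k) :
    Psi d k (u + v) b = Psi d k u b + Psi d k v b := by
  ext p
  show (if p.1 = b then (u + v) p.2 else 0) = _
  have : (Psi d k u b + Psi d k v b) p = Psi d k u b p + Psi d k v b p := rfl
  rw [this]
  simp only [Psi, PiLp.add_apply, PiLp.toLp_apply]
  split_ifs <;> simp

lemma euclid_sum_apply {ι : Type*} (d : ℕ) (T : Finset ι) (v : ι → EuclideanSpace ℝ (Fin d))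
    (j : Fin d) : (∑ i ∈ T, v i) j = ∑ i ∈ T, v i j := by
  induction T using Finset.cons_induction with
  | empty => rfl
  | cons a s ha ih => rw [Finset.sum_cons, Finset.sum_cons, ← ih]; rfl

lemma psi_sum_apply {ι : Type*} (d k : ℕ) (T : Finset ι) (v : ι → EuclideanSpace ℝ (Fin d))
    (c : ι → Fin k) (p : Fin k × Fin d) :
    (∑ i ∈ T, Psi d k (v i) (c i)) p = ∑ i ∈ T, (if c i = p.1 then v i p.2 else 0) := by
  induction T using Finset.cons_induction with
  | empty => rfl
  | cons a s ha ih =>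
    rw [Finset.sum_cons, Finset.sum_cons, ← ih]
    simp only [Psi, eq_comm]
    rfl

lemma norm_sq_sum_psi {ι : Type*} [DecidableEq ι] (d k : ℕ) (T : Finset ι)
    (v : ι → EuclideanSpace ℝ (Fin d)) (c : ι → Fin k) :
    ‖∑ i ∈ T, Psi d k (v i) (c i)‖ ^ 2
      = ∑ b : Fin k, ‖∑ i ∈ T.filter (fun i => c i = b), v i‖ ^ 2 := by
  have key : ∀ (w : EuclideanSpace ℝ (Fin d)), ‖w‖^2 = ∑ j, (w j)^2 := by
    intro w
    rw [EuclideanSpace.norm_eq, Real.sq_sqrt (by positivity)]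
    simp [sq_abs]
  have key2 : ∀ (w : EuclideanSpace ℝ (Fin k × Fin d)), ‖w‖^2 = ∑ p, (w p)^2 := by
    intro w
    rw [EuclideanSpace.norm_eq, Real.sq_sqrt (by positivity)]
    simp [sq_abs]
  rw [key2, Fintype.sum_prod_type]
  refine Finset.sum_congr rfl fun b _ => ?_
  rw [key]
  refine Finset.sum_congr rfl fun j _ => ?_
  congr 1
  rw [psi_sum_apply, euclid_sum_apply, Finset.sum_filter]

/-- Bound on the norm of a sum of feature vectors with deviation control. -/
lemma norm_sum_psi_le {ι : Type*} [DecidableEq ι] (d k : ℕ) (B : ℝ) (hB : 0 ≤ B)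
    (T : Finset ι) (v : ι → EuclideanSpace ℝ (Fin d)) (c : ι → Fin k)
    (hdev : ∀ S ⊆ T, ‖∑ i ∈ S, v i‖ ≤ B * Real.sqrt (S.card)) :
    ‖∑ i ∈ T, Psi d k (v i) (c i)‖ ≤ B * Real.sqrt (T.card) := by
  have h1 : ‖∑ i ∈ T, Psi d k (v i) (c i)‖ ^ 2 ≤ B^2 * T.card := by
    rw [norm_sq_sum_psi]
    have hb : ∀ b : Fin k, ‖∑ i ∈ T.filter (fun i => c i = b), v i‖ ^ 2
        ≤ B^2 * ((T.filter (fun i => c i = b)).card : ℝ) := by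
      intro b
      have h := hdev (T.filter (fun i => c i = b)) (Finset.filter_subset _ _)
      have h2 : (0:ℝ) ≤ B * Real.sqrt ((T.filter (fun i => c i = b)).card) := by positivity
      calc ‖∑ i ∈ T.filter (fun i => c i = b), v i‖ ^ 2
          ≤ (B * Real.sqrt ((T.filter (fun i => c i = b)).card))^2 := by
            exact pow_le_pow_left₀ (norm_nonneg _) h 2
        _ = B^2 * ((T.filter (fun i => c i = b)).card : ℝ) := by
            rw [mul_pow, Real.sq_sqrt (by positivity)]
    calc ∑ b : Fin k, ‖∑ i ∈ T.filter (fun i => c i = b), v i‖ ^ 2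
        ≤ ∑ b : Fin k, B^2 * ((T.filter (fun i => c i = b)).card : ℝ) :=
          Finset.sum_le_sum fun b _ => hb b
      _ = B^2 * ∑ b : Fin k, ((T.filter (fun i => c i = b)).card : ℝ) := by
          rw [Finset.mul_sum]
      _ = B^2 * T.card := by
          congr 1
          rw [← Nat.cast_sum]
          congr 1
          exact (Finset.card_eq_sum_card_fiberwise (fun i _ => Finset.mem_univ (c i))).symm
  calc ‖∑ i ∈ T, Psi d k (v i) (c i)‖
      = Real.sqrt (‖∑ i ∈ T, Psi d k (v i) (c i)‖ ^ 2) := by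
        rw [Real.sqrt_sq (norm_nonneg _)]
    _ ≤ Real.sqrt (B^2 * T.card) := Real.sqrt_le_sqrt h1
    _ = B * Real.sqrt (T.card) := by
        rw [Real.sqrt_mul (by positivity), Real.sqrt_sq hB]

set_option maxHeartbeats 1000000

/-- gradient bound on the orthogonal direction
`w' := (w* − κ·what)/√(1−κ²)`, where `κ := ⟨what, w*⟩ ∈ (0,1)`. -/
theorem stmt_6 {ι : Type*} [DecidableEq ι] (d k n : ℕ) (hd : 0 < d) (hk : 0 < k) (hn : 0 < n)
    (γ σ C : ℝ) (hγ : 0 < γ) (hσ : 0 < σ) (hC : 0 < C)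
    (η : ℝ) (hη0 : 0 < η) (hη1 : η < 1)
    (wstar what : EuclideanSpace ℝ (Fin k × Fin d))
    (hwstar : ‖wstar‖ ≤ 1) (hwhat : ‖what‖ ≤ 1)
    (κ : ℝ) (hκdef : κ = ⟪what, wstar⟫) (hκ0 : 0 < κ) (hκ1 : κ < 1)
    (P O D : Finset ι) (hPO : Disjoint P O) (hPD : Disjoint P D) (hOD : Disjoint O D)
    (x : ι → EuclideanSpace ℝ (Fin d)) (y yhat : ι → Fin k)
    (hmargin : ∀ i ∈ P ∪ O, ∀ y' : Fin k, y' ≠ y i →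
      γ ≤ ⟪block d k wstar (y i) - block d k wstar y', x i⟫)
    (hP : ∀ i ∈ P, yhat i ≠ y i ∧
      ⟪block d k what (y i) - block d k what (yhat i), x i⟫ ≤ γ / 2)
    (hO : ∀ i ∈ O, yhat i = y i ∨
      ⟪block d k what (y i) - block d k what (yhat i), x i⟫ ≤ γ)
    (hDcard : (D.card : ℝ) ≤ η * n)
    (μ : ι → EuclideanSpace ℝ (Fin d))
    (hDmargin : ∀ i ∈ D, ∀ y' : Fin k, y' ≠ y i →
      γ ≤ ⟪block d k wstar (y i) - block d k wstar y', μ i⟫)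
    (hDdev : ∀ T ⊆ D, ‖∑ i ∈ T, (x i - μ i)‖ ≤ C * σ * Real.sqrt (T.card * n))
    (hDhinge : ∀ i ∈ D, -γ ≤ ⟪block d k what (yhat i) - block d k what (y i), x i⟫)
    (hPbig : 2 * C * σ * n * Real.sqrt η / γ < (P.card : ℝ) / 4) :
    ⟪(1/γ) • ∑ i ∈ P ∪ O ∪ D, (Psi d k (x i) (yhat i) - Psi d k (x i) (y i)),
        (Real.sqrt (1 - κ^2))⁻¹ • (wstar - κ • what)⟫
      ≤ -(Real.sqrt 5 / 4) * (P.card : ℝ) := by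
  set s : ℝ := Real.sqrt (1 - κ^2) with hs_def
  have hκsq : 0 < 1 - κ^2 := by nlinarith
  have hs0 : 0 < s := Real.sqrt_pos.mpr hκsq
  have hs2 : s^2 = 1 - κ^2 := Real.sq_sqrt hκsq.le
  set F : ι → ℝ := fun i =>
    ⟪Psi d k (x i) (yhat i) - Psi d k (x i) (y i), wstar - κ • what⟫ with hF_def
  -- rewrite the LHS
  have hLHS : ⟪(1/γ) • ∑ i ∈ P ∪ O ∪ D, (Psi d k (x i) (yhat i) - Psi d k (x i) (y i)),
      s⁻¹ • (wstar - κ • what)⟫ = (1/γ) * (s⁻¹ * ∑ i ∈ P ∪ O ∪ D, F i) := by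
    rw [real_inner_smul_left, real_inner_smul_right, sum_inner]
  -- scalar form of F
  have hFi : ∀ i, F i = ⟪block d k wstar (yhat i) - block d k wstar (y i), x i⟫
      - κ * ⟪block d k what (yhat i) - block d k what (y i), x i⟫ := by
    intro i
    rw [hF_def]
    simp only
    rw [inner_sub_right, real_inner_smul_right, inner_Psi_sub, inner_Psi_sub]
  have hflip : ∀ (w : EuclideanSpace ℝ (Fin k × Fin d)) (a b : Fin k)
      (z : EuclideanSpace ℝ (Fin d)),
      ⟪block d k w b - block d k w a, z⟫ = -⟪block d k w a - block d k w b, z⟫ := by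
    intro w a b z
    rw [inner_sub_left, inner_sub_left]; ring
  -- bound on P
  have hPsum : ∑ i ∈ P, F i ≤ (P.card : ℝ) * (-(γ * (1 - κ/2))) := by
    have : ∀ i ∈ P, F i ≤ -(γ * (1 - κ/2)) := by
      intro i hi
      obtain ⟨hne, hw⟩ := hP i hi
      have h1 := hmargin i (Finset.mem_union_left _ hi) (yhat i) hne
      have h2 : ⟪block d k what (yhat i) - block d k what (y i), x i⟫ ≥ -(γ/2) := by
        rw [hflip]; linarith
      rw [hFi, hflip]
      nlinarith
    calc ∑ i ∈ P, F i ≤ ∑ i ∈ P, -(γ * (1 - κ/2)) := Finset.sum_le_sum this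
      _ = (P.card : ℝ) * (-(γ * (1 - κ/2))) := by rw [Finset.sum_const, nsmul_eq_mul]
  -- bound on O
  have hOsum : ∑ i ∈ O, F i ≤ 0 := by
    apply Finset.sum_nonpos
    intro i hi
    by_cases heq : yhat i = y i
    · rw [hFi, heq]; simp
    rcases hO i hi with heq' | hw
    · exact absurd heq' heq
    · have h1 := hmargin i (Finset.mem_union_right _ hi) (yhat i) heq
      have h2 : ⟪block d k what (yhat i) - block d k what (y i), x i⟫ ≥ -γ := by
        rw [hflip]; linarith
      rw [hFi, hflip]
      nlinarith
  -- bound on D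
  have hDdev' : ∀ S ⊆ D, ‖∑ i ∈ S, (x i - μ i)‖
      ≤ (C * σ * Real.sqrt n) * Real.sqrt (S.card) := by
    intro S hS
    have := hDdev S hS
    calc ‖∑ i ∈ S, (x i - μ i)‖ ≤ C * σ * Real.sqrt (S.card * n) := this
      _ = (C * σ * Real.sqrt n) * Real.sqrt (S.card) := by
          rw [Real.sqrt_mul (by clear hflip; positivity)]; ring
  have hnormPsi : ∀ c : ι → Fin k, ‖∑ i ∈ D, Psi d k (x i - μ i) (c i)‖
      ≤ (C * σ * Real.sqrt n) * Real.sqrt (D.card) :=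
    fun c => norm_sum_psi_le d k _ (by positivity) D _ c hDdev'
  have hsqrtD : Real.sqrt (D.card : ℝ) ≤ Real.sqrt (η * n) :=
    Real.sqrt_le_sqrt hDcard
  have hmuln : Real.sqrt (n:ℝ) * Real.sqrt (η * n) = Real.sqrt η * n := by
    rw [← Real.sqrt_mul (Nat.cast_nonneg n),
      show ((n:ℝ) * (η * n)) = η * (n:ℝ)^2 by ring,
      Real.sqrt_mul hη0.le, Real.sqrt_sq (Nat.cast_nonneg n)]
  set G : ι → ℝ := fun i =>
    ⟪Psi d k (x i - μ i) (yhat i) - Psi d k (x i - μ i) (y i), wstar⟫ with hG_def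
  have hFG : ∀ i ∈ D, F i - G i ≤ 0 := by
    intro i hi
    have hGi : G i = ⟪block d k wstar (yhat i) - block d k wstar (y i), x i - μ i⟫ := by
      rw [hG_def]; simp only; rw [inner_Psi_sub]
    by_cases hne : yhat i = y i
    · rw [hFi, hGi, hne]; simp
    · have h2 := hDhinge i hi
      rw [hFi, hGi, inner_sub_right]
      have h1' : ⟪block d k wstar (yhat i) - block d k wstar (y i), μ i⟫ ≤ -γ := by
        rw [hflip wstar (y i) (yhat i) (μ i)]
        linarith [hDmargin i hi (yhat i) hne]
      have h3 : κ * (-γ) ≤ κ * ⟪block d k what (yhat i) - block d k what (y i), x i⟫ :=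
        mul_le_mul_of_nonneg_left h2 hκ0.le
      have h4 : κ * γ ≤ γ := by nlinarith
      linarith
  clear hflip
  have hGsum : ∑ i ∈ D, G i ≤ 2 * C * σ * n * Real.sqrt η := by
    have heq : ∑ i ∈ D, G i = ⟪(∑ i ∈ D, Psi d k (x i - μ i) (yhat i))
        - (∑ i ∈ D, Psi d k (x i - μ i) (y i)), wstar⟫ := by
      rw [← Finset.sum_sub_distrib, sum_inner]
    rw [heq]
    have hcs := real_inner_le_norm ((∑ i ∈ D, Psi d k (x i - μ i) (yhat i))
        - (∑ i ∈ D, Psi d k (x i - μ i) (y i))) wstar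
    have hnorm : ‖(∑ i ∈ D, Psi d k (x i - μ i) (yhat i))
        - (∑ i ∈ D, Psi d k (x i - μ i) (y i))‖
        ≤ 2 * ((C * σ * Real.sqrt n) * Real.sqrt (D.card)) := by
      calc ‖(∑ i ∈ D, Psi d k (x i - μ i) (yhat i))
          - (∑ i ∈ D, Psi d k (x i - μ i) (y i))‖
          ≤ ‖∑ i ∈ D, Psi d k (x i - μ i) (yhat i)‖
            + ‖∑ i ∈ D, Psi d k (x i - μ i) (y i)‖ := norm_sub_le _ _
        _ ≤ 2 * ((C * σ * Real.sqrt n) * Real.sqrt (D.card)) := by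
            have := hnormPsi yhat
            have := hnormPsi y
            linarith
    have hbound : 2 * ((C * σ * Real.sqrt n) * Real.sqrt (D.card))
        ≤ 2 * C * σ * n * Real.sqrt η := by
      calc 2 * ((C * σ * Real.sqrt n) * Real.sqrt (D.card))
          ≤ 2 * ((C * σ * Real.sqrt n) * Real.sqrt (η * n)) := by
            apply mul_le_mul_of_nonneg_left _ (by norm_num)
            exact mul_le_mul_of_nonneg_left hsqrtD (by positivity)
        _ = 2 * C * σ * (Real.sqrt (n:ℝ) * Real.sqrt (η * n)) := by ring
        _ = 2 * C * σ * n * Real.sqrt η := by rw [hmuln]; ring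
    have hw1 : ‖wstar‖ ≤ 1 := hwstar
    calc ⟪(∑ i ∈ D, Psi d k (x i - μ i) (yhat i))
        - (∑ i ∈ D, Psi d k (x i - μ i) (y i)), wstar⟫
        ≤ ‖(∑ i ∈ D, Psi d k (x i - μ i) (yhat i))
          - (∑ i ∈ D, Psi d k (x i - μ i) (y i))‖ * ‖wstar‖ := hcs
      _ ≤ 2 * ((C * σ * Real.sqrt n) * Real.sqrt (D.card)) * 1 := by
          apply mul_le_mul hnorm hw1 (norm_nonneg _) (by positivity)
      _ = 2 * ((C * σ * Real.sqrt n) * Real.sqrt (D.card)) := mul_one _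
      _ ≤ 2 * C * σ * n * Real.sqrt η := hbound
  have hDsum : ∑ i ∈ D, F i ≤ 2 * C * σ * n * Real.sqrt η := by
    have : ∑ i ∈ D, F i ≤ ∑ i ∈ D, G i := by
      have := Finset.sum_le_sum (fun i hi => by linarith [hFG i hi] :
        ∀ i ∈ D, F i ≤ G i)
      exact this
    linarith
  -- total
  have hPOD : Disjoint (P ∪ O) D := Finset.disjoint_union_left.mpr ⟨hPD, hOD⟩
  have hsum_split : ∑ i ∈ P ∪ O ∪ D, F i = ∑ i ∈ P, F i + ∑ i ∈ O, F i + ∑ i ∈ D, F i := by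
    rw [Finset.sum_union hPOD, Finset.sum_union hPO]
  have htotal : ∑ i ∈ P ∪ O ∪ D, F i
      ≤ (P.card : ℝ) * (-(γ * (1 - κ/2))) + 2 * C * σ * n * Real.sqrt η := by
    rw [hsum_split]; linarith
  have hη' : 2 * C * σ * n * Real.sqrt η ≤ γ * (P.card : ℝ) / 4 := by
    have h2 := (div_lt_iff₀ hγ).mp hPbig
    nlinarith
  rw [hLHS]
  have hp0 : (0:ℝ) ≤ (P.card : ℝ) := Nat.cast_nonneg _
  have hkey : Real.sqrt 5 * s ≤ 3 - 2 * κ := by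
    have : Real.sqrt 5 * s = Real.sqrt (5 * (1 - κ^2)) := by
      rw [Real.sqrt_mul (by norm_num)]
    rw [this]
    calc Real.sqrt (5 * (1 - κ^2)) ≤ Real.sqrt ((3 - 2*κ)^2) := by
          apply Real.sqrt_le_sqrt; nlinarith [sq_nonneg (3*κ - 2)]
      _ = 3 - 2*κ := Real.sqrt_sq (by linarith)
  have hstep1 : (1/γ) * (s⁻¹ * ∑ i ∈ P ∪ O ∪ D, F i)
      ≤ (1/γ) * (s⁻¹ * (-(γ * (P.card : ℝ) * (3/4 - κ/2)))) := by
    apply mul_le_mul_of_nonneg_left _ (by positivity)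
    apply mul_le_mul_of_nonneg_left _ (by positivity)
    calc ∑ i ∈ P ∪ O ∪ D, F i
        ≤ (P.card : ℝ) * (-(γ * (1 - κ/2))) + 2 * C * σ * n * Real.sqrt η := htotal
      _ ≤ (P.card : ℝ) * (-(γ * (1 - κ/2))) + γ * (P.card : ℝ) / 4 := by linarith
      _ = -(γ * (P.card : ℝ) * (3/4 - κ/2)) := by ring
  refine hstep1.trans ?_
  have heq : (1/γ) * (s⁻¹ * (-(γ * (P.card : ℝ) * (3/4 - κ/2))))
      = -(s⁻¹ * ((P.card : ℝ) * (3/4 - κ/2))) := by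
    field_simp
  rw [heq]
  have hsinv : s * s⁻¹ = 1 := mul_inv_cancel₀ hs0.ne'
  have h5 : Real.sqrt 5 * s * (P.card : ℝ) ≤ (3 - 2*κ) * (P.card : ℝ) :=
    mul_le_mul_of_nonneg_right hkey hp0
  rw [neg_mul, le_neg, neg_neg]
  rw [← sub_nonneg]
  have hfinal : s⁻¹ * ((P.card : ℝ) * (3/4 - κ/2)) - Real.sqrt 5 / 4 * (P.card : ℝ)
      = s⁻¹ * ((P.card : ℝ) * ((3 - 2*κ) - Real.sqrt 5 * s)) / 4 := by
    field_simp
    ring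
  rw [hfinal]
  have : (0:ℝ) ≤ (P.card : ℝ) * ((3 - 2*κ) - Real.sqrt 5 * s) := by nlinarith
  positivity
end

section
/- (Dirty-sample contribution in the w* direction.) Let d, k, n be positive integers, γ, C, σ > 0, and w* ∈ ℝ^{kd} with ‖w*‖₂ ≤ 1. Let D be a finite index set with samples (x_i, y_i) ∈ ℝ^d × {1,…,k}, labels ŷ_i ∈ {1,…,k}, and centers μ_i ∈ ℝ^d such that for every i ∈ D and every y' ≠ y_i, ⟨w*_{y_i} − w*_{y'}, μ_i⟩ ≥ γ, and such that for every subset T ⊆ D, ‖Σ_{i∈T}(x_i − μ_i)‖₂ ≤ C·σ·√(|T|·n). Then Σ_{i∈D} ⟨w*_{ŷ_i} − w*_{y_i}, x_i⟩ ≤ −γ·|{ i ∈ D : ŷ_i ≠ y_i }| + 2Cσ·√(|D|·n). -/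
open scoped BigOperators RealInnerProductSpace
open Finset

lemma block_neg (d k : ℕ) (w : EuclideanSpace ℝ (Fin k × Fin d)) (y : Fin k) :
    block d k (-w) y = -(block d k w y) := rfl

lemma blocknorm (d k : ℕ) (w : EuclideanSpace ℝ (Fin k × Fin d)) :
    ∑ y : Fin k, ‖block d k w y‖ ^ 2 = ‖w‖ ^ 2 := by
  have h1 : ∀ (κ : Type) [Fintype κ] (u : EuclideanSpace ℝ κ), ‖u‖ ^ 2 = ∑ j, (u j) ^ 2 := by
    intro κ _ u
    rw [EuclideanSpace.norm_eq, Real.sq_sqrt (by positivity)]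
    simp [sq_abs]
  simp only [h1]
  rw [← Fintype.sum_prod_type']
  simp [block]

lemma key_lemma {ι : Type*} (d k n : ℕ) (C σ : ℝ) (hC : 0 < C) (hσ : 0 < σ)
    (w : EuclideanSpace ℝ (Fin k × Fin d)) (hw : ‖w‖ ≤ 1)
    (S : Finset ι) (v : ι → EuclideanSpace ℝ (Fin d)) (z : ι → Fin k)
    (hdev : ∀ y : Fin k, ‖∑ i ∈ S.filter (fun i => z i = y), v i‖
      ≤ C * σ * Real.sqrt ((S.filter (fun i => z i = y)).card * n)) :
    ∑ i ∈ S, ⟪block d k w (z i), v i⟫ ≤ C * σ * Real.sqrt (S.card * n) := by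
  classical
  have fib : ∑ y : Fin k, ∑ i ∈ S.filter (fun i => z i = y), ⟪block d k w (z i), v i⟫
      = ∑ i ∈ S, ⟪block d k w (z i), v i⟫ := Finset.sum_fiberwise S z _
  rw [← fib]
  set a : Fin k → ℝ := fun y => ‖block d k w y‖ with ha
  set b : Fin k → ℝ := fun y => C * σ * Real.sqrt ((S.filter (fun i => z i = y)).card * n) with hb
  have step1 : ∀ y : Fin k, ∑ i ∈ S.filter (fun i => z i = y), ⟪block d k w (z i), v i⟫
      ≤ a y * b y := by
    intro y
    have heq : ∑ i ∈ S.filter (fun i => z i = y), ⟪block d k w (z i), v i⟫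
        = ⟪block d k w y, ∑ i ∈ S.filter (fun i => z i = y), v i⟫ := by
      rw [inner_sum]
      refine Finset.sum_congr rfl fun i hi => ?_
      rw [(Finset.mem_filter.1 hi).2]
    rw [heq]
    calc ⟪block d k w y, ∑ i ∈ S.filter (fun i => z i = y), v i⟫
        ≤ a y * ‖∑ i ∈ S.filter (fun i => z i = y), v i‖ := real_inner_le_norm _ _
      _ ≤ a y * b y := mul_le_mul_of_nonneg_left (hdev y) (norm_nonneg _)
  have hCS : ∑ y : Fin k, a y * b y ≤
      Real.sqrt (∑ y : Fin k, a y ^ 2) * Real.sqrt (∑ y : Fin k, b y ^ 2) := by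
    have h := Finset.sum_mul_sq_le_sq_mul_sq Finset.univ a b
    calc ∑ y : Fin k, a y * b y ≤ |∑ y : Fin k, a y * b y| := le_abs_self _
      _ = Real.sqrt ((∑ y : Fin k, a y * b y) ^ 2) := (Real.sqrt_sq_eq_abs _).symm
      _ ≤ Real.sqrt ((∑ y : Fin k, a y ^ 2) * ∑ y : Fin k, b y ^ 2) := Real.sqrt_le_sqrt h
      _ = _ := Real.sqrt_mul (by positivity) _
  have hA : Real.sqrt (∑ y : Fin k, a y ^ 2) ≤ 1 := by
    rw [ha]; simp only [blocknorm]
    rw [Real.sqrt_sq (norm_nonneg w)]; exact hw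
  have hB : Real.sqrt (∑ y : Fin k, b y ^ 2) = C * σ * Real.sqrt (S.card * n) := by
    have hb2 : ∀ y : Fin k, b y ^ 2 = C ^ 2 * σ ^ 2 * n * ((S.filter (fun i => z i = y)).card) := by
      intro y
      rw [hb]
      rw [mul_pow, mul_pow, Real.sq_sqrt (by positivity)]
      ring
    simp only [hb2]
    rw [← Finset.mul_sum]
    have hcard : ∑ y : Fin k, ((S.filter (fun i => z i = y)).card : ℝ) = (S.card : ℝ) := by
      rw [← Nat.cast_sum]
      norm_cast
      exact (Finset.card_eq_sum_card_fiberwise (fun i _ => Finset.mem_univ (z i))).symm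
    rw [hcard]
    rw [Real.sqrt_mul (by positivity), Real.sqrt_mul (by positivity), Real.sqrt_mul (by positivity),
      Real.sqrt_sq hC.le, Real.sqrt_sq hσ.le, Real.sqrt_mul (by positivity)]
    ring
  calc ∑ y : Fin k, ∑ i ∈ S.filter (fun i => z i = y), ⟪block d k w (z i), v i⟫
      ≤ ∑ y : Fin k, a y * b y := Finset.sum_le_sum fun y _ => step1 y
    _ ≤ Real.sqrt (∑ y : Fin k, a y ^ 2) * Real.sqrt (∑ y : Fin k, b y ^ 2) := hCS
    _ ≤ 1 * (C * σ * Real.sqrt (S.card * n)) := by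
        rw [hB]; exact mul_le_mul_of_nonneg_right hA (by positivity)
    _ = _ := one_mul _


/-- dirty-sample contribution in the `w*` direction. -/
theorem stmt_13 {ι : Type*} (d k n : ℕ) (hd : 0 < d) (hk : 0 < k) (hn : 0 < n)
    (γ C σ : ℝ) (hγ : 0 < γ) (hC : 0 < C) (hσ : 0 < σ)
    (wstar : EuclideanSpace ℝ (Fin k × Fin d)) (hwstar : ‖wstar‖ ≤ 1)
    (D : Finset ι) (x μ : ι → EuclideanSpace ℝ (Fin d)) (y yhat : ι → Fin k)
    (hmargin : ∀ i ∈ D, ∀ y' : Fin k, y' ≠ y i →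
      γ ≤ ⟪block d k wstar (y i) - block d k wstar y', μ i⟫)
    (hdev : ∀ T ⊆ D, ‖∑ i ∈ T, (x i - μ i)‖ ≤ C * σ * Real.sqrt (T.card * n)) :
    ∑ i ∈ D, ⟪block d k wstar (yhat i) - block d k wstar (y i), x i⟫
      ≤ -γ * ((D.filter fun i => yhat i ≠ y i).card : ℝ)
          + 2 * C * σ * Real.sqrt (D.card * n) := by
  classical
  set S := D.filter fun i => yhat i ≠ y i with hS
  have hSD : S ⊆ D := Finset.filter_subset _ _
  set v : ι → EuclideanSpace ℝ (Fin d) := fun i => x i - μ i with hv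
  -- the sum restricts to S
  have hrestrict : ∑ i ∈ D, ⟪block d k wstar (yhat i) - block d k wstar (y i), x i⟫
      = ∑ i ∈ S, ⟪block d k wstar (yhat i) - block d k wstar (y i), x i⟫ := by
    rw [hS]
    rw [← Finset.sum_filter_add_sum_filter_not D (fun i => yhat i ≠ y i)]
    have : ∑ i ∈ D.filter (fun i => ¬ yhat i ≠ y i),
        ⟪block d k wstar (yhat i) - block d k wstar (y i), x i⟫ = 0 := by
      refine Finset.sum_eq_zero fun i hi => ?_
      have : yhat i = y i := not_not.mp (Finset.mem_filter.1 hi).2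
      rw [this, sub_self, inner_zero_left]
    rw [this, add_zero]
  rw [hrestrict]
  -- decompose each term
  have hdecomp : ∀ i ∈ S, ⟪block d k wstar (yhat i) - block d k wstar (y i), x i⟫
      = ⟪block d k wstar (yhat i) - block d k wstar (y i), μ i⟫
        + (⟪block d k wstar (yhat i), v i⟫ + ⟪block d k (-wstar) (y i), v i⟫) := by
    intro i _
    rw [block_neg]
    rw [inner_neg_left]
    have : x i = μ i + v i := by rw [hv]; rw [add_sub_cancel]
    rw [this]
    rw [inner_add_right, inner_sub_left, inner_sub_left]
    ring
  rw [Finset.sum_congr rfl hdecomp, Finset.sum_add_distrib, Finset.sum_add_distrib]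
  -- margin part
  have hmarg : ∑ i ∈ S, ⟪block d k wstar (yhat i) - block d k wstar (y i), μ i⟫
      ≤ -γ * (S.card : ℝ) := by
    have : ∀ i ∈ S, ⟪block d k wstar (yhat i) - block d k wstar (y i), μ i⟫ ≤ -γ := by
      intro i hi
      have hiD : i ∈ D := hSD hi
      have hne : yhat i ≠ y i := (Finset.mem_filter.1 hi).2
      have := hmargin i hiD (yhat i) hne
      have heq : ⟪block d k wstar (yhat i) - block d k wstar (y i), μ i⟫
          = -⟪block d k wstar (y i) - block d k wstar (yhat i), μ i⟫ := by
        rw [← inner_neg_left, neg_sub]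
      rw [heq]
      linarith
    calc ∑ i ∈ S, ⟪block d k wstar (yhat i) - block d k wstar (y i), μ i⟫
        ≤ ∑ _i ∈ S, (-γ) := Finset.sum_le_sum this
      _ = -γ * (S.card : ℝ) := by rw [Finset.sum_const]; simp [mul_comm]
  -- deviation parts via key_lemma
  have hdevS : ∀ (z : ι → Fin k) (yy : Fin k), ‖∑ i ∈ S.filter (fun i => z i = yy), v i‖
      ≤ C * σ * Real.sqrt ((S.filter (fun i => z i = yy)).card * n) :=
    fun z yy => hdev _ ((Finset.filter_subset _ _).trans hSD)
  have h1 : ∑ i ∈ S, ⟪block d k wstar (yhat i), v i⟫ ≤ C * σ * Real.sqrt (S.card * n) :=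
    key_lemma d k n C σ hC hσ wstar hwstar S v yhat (hdevS yhat)
  have h2 : ∑ i ∈ S, ⟪block d k (-wstar) (y i), v i⟫ ≤ C * σ * Real.sqrt (S.card * n) :=
    key_lemma d k n C σ hC hσ (-wstar) (by rwa [norm_neg]) S v y (hdevS y)
  have hcard : Real.sqrt (S.card * n) ≤ Real.sqrt (D.card * n) := by
    apply Real.sqrt_le_sqrt
    have h : (S.card : ℝ) ≤ D.card := Nat.cast_le.mpr (Finset.card_le_card hSD)
    have hn0 : (0:ℝ) ≤ n := Nat.cast_nonneg n
    nlinarith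
  have hmul : C * σ * Real.sqrt (S.card * n) ≤ C * σ * Real.sqrt (D.card * n) :=
    mul_le_mul_of_nonneg_left hcard (by positivity)
  linarith
end
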